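/- Let H ⊆ 2^V \ {∅} be a hypergraph and x a position of the hypergraph Nim game. If H₀ ∈ H and x → a, x → b are both H₀-moves with a ≤ b componentwise, then every c ∈ ℤ≥0^V with a ≤ c ≤ b is also reachable from x by an H₀-move, and the set of heights {h(c) : a ≤ c ≤ b} equals the full integer interval [h(a), h(b)]. -/
import Mathlib

/-- A move in hypergraph Nim: choose an edge `E ∈ H`, strictly decrease all
coordinates in `E`, leave all other coordinates unchanged. -/
def Move {V : Type*} (H : Set (Set V)) (x x' : V → ℕ) : Prop :=
  ∃ E ∈ H, (∀ i ∈ E, x' i < x i) ∧ ∀ i ∉ E, x' i = x i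

/-- The height of a position: the maximum number of consecutive moves from `x`. -/
noncomputable def height {V : Type*} (H : Set (Set V)) (x : V → ℕ) : ℕ :=
  sSup {n : ℕ | ∃ f : ℕ → V → ℕ, f 0 = x ∧ ∀ i < n, Move H (f i) (f (i + 1))}

section Aux
open Classical
set_option linter.unusedSectionVars false

variable {V : Type*} [Fintype V]

/-- The set of attainable lengths of move sequences from `x`. -/
def SeqSet (H : Set (Set V)) (x : V → ℕ) : Set ℕ :=
  {n : ℕ | ∃ f : ℕ → V → ℕ, f 0 = x ∧ ∀ i < n, Move H (f i) (f (i + 1))}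

lemma height_eq (H : Set (Set V)) (x : V → ℕ) : height H x = sSup (SeqSet H x) := rfl

lemma zero_mem_seqSet (H : Set (Set V)) (x : V → ℕ) : 0 ∈ SeqSet H x :=
  ⟨fun _ => x, rfl, fun i hi => absurd hi (by omega)⟩

lemma seqSet_nonempty (H : Set (Set V)) (x : V → ℕ) : (SeqSet H x).Nonempty :=
  ⟨0, zero_mem_seqSet H x⟩

lemma seqSet_downward {H : Set (Set V)} {x : V → ℕ} {m k : ℕ}
    (hm : m ∈ SeqSet H x) (hk : k ≤ m) : k ∈ SeqSet H x := by
  obtain ⟨f, h0, h⟩ := hm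
  exact ⟨f, h0, fun i hi => h i (lt_of_lt_of_le hi hk)⟩

lemma cons_mem_seqSet {H : Set (Set V)} {x y : V → ℕ} {n : ℕ}
    (hxy : Move H x y) (hn : n ∈ SeqSet H y) : n + 1 ∈ SeqSet H x := by
  obtain ⟨g, hg0, hg⟩ := hn
  refine ⟨fun i => if i = 0 then x else g (i - 1), by simp, fun i hi => ?_⟩
  rcases Nat.eq_zero_or_pos i with rfl | hip
  · simpa [hg0] using hxy
  · have h1 : ¬ (i = 0) := by omega
    have h2 : ¬ (i + 1 = 0) := by omega
    have := hg (i - 1) (by omega)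
    have h3 : i - 1 + 1 = i + 1 - 1 := by omega
    simpa [h1, h2, h3] using this

lemma move_sum_lt {H : Set (Set V)} (hE : ∅ ∉ H) {y z : V → ℕ} (h : Move H y z) :
    ∑ i, z i < ∑ i, y i := by
  obtain ⟨E, hEH, h1, h2⟩ := h
  have hne : E.Nonempty := Set.nonempty_iff_ne_empty.2 (fun h => hE (h ▸ hEH))
  obtain ⟨j, hj⟩ := hne
  refine Finset.sum_lt_sum (fun i _ => ?_) ⟨j, Finset.mem_univ j, h1 j hj⟩
  by_cases hiE : i ∈ E
  · exact (h1 i hiE).le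
  · exact (h2 i hiE).le

lemma seqSet_bddAbove {H : Set (Set V)} (hE : ∅ ∉ H) (x : V → ℕ) :
    BddAbove (SeqSet H x) := by
  refine ⟨∑ i, x i, fun n hn => ?_⟩
  obtain ⟨f, h0, h⟩ := hn
  have key : ∀ k ≤ n, k + ∑ i, f k i ≤ ∑ i, f 0 i := by
    intro k hk
    induction k with
    | zero => simp
    | succ m ih =>
        have h1 := move_sum_lt hE (h m (by omega))
        have := ih (by omega)
        omega
  have := key n le_rfl
  rw [h0] at this
  omega

lemma seqSet_mono {H : Set (Set V)} :
    ∀ (n : ℕ) (a c : V → ℕ), a ≤ c → n ∈ SeqSet H a → n ∈ SeqSet H c := by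
  intro n
  induction n with
  | zero => exact fun a c _ _ => zero_mem_seqSet H c
  | succ m ih =>
      intro a c hac hn
      obtain ⟨f, h0, h⟩ := hn
      obtain ⟨E, hEH, h1, h2⟩ := h 0 (by omega)
      rw [h0] at h1 h2
      set c' : V → ℕ := fun i => if i ∈ E then f 1 i else c i with hc'
      have hmove : Move H c c' := by
        refine ⟨E, hEH, fun i hi => ?_, fun i hi => by simp [hc', hi]⟩
        simp only [hc', if_pos hi]
        exact lt_of_lt_of_le (h1 i hi) (hac i)
      have hle : f 1 ≤ c' := by
        intro i
        by_cases hi : i ∈ E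
        · simp [hc', hi]
        · simp [hc', hi, h2 i hi]
          exact hac i
      have htail : m ∈ SeqSet H (f 1) :=
        ⟨fun i => f (i + 1), rfl, fun i hi => h (i + 1) (by omega)⟩
      exact cons_mem_seqSet hmove (ih (f 1) c' hle htail)

lemma seqSet_step {H : Set (Set V)} :
    ∀ (n : ℕ) (x : V → ℕ) (j : V),
      (n + 1) ∈ SeqSet H (Function.update x j (x j + 1)) → n ∈ SeqSet H x := by
  intro n
  induction n with
  | zero => exact fun x j _ => zero_mem_seqSet H x
  | succ m ih =>
      intro x j hn
      obtain ⟨f, h0, h⟩ := hn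
      obtain ⟨E, hEH, h1, h2⟩ := h 0 (by omega)
      rw [h0] at h1 h2
      simp only [Nat.zero_add] at h1 h2
      have htail : m + 1 ∈ SeqSet H (f 1) :=
        ⟨fun i => f (i + 1), rfl, fun i hi => h (i + 1) (by omega)⟩
      by_cases hjE : j ∈ E
      · have hj1 : f 1 j ≤ x j := by
          have := h1 j hjE
          simp [Function.update_self] at this
          omega
        rcases lt_or_eq_of_le hj1 with hlt | heq
        · -- f 1 j < x j : direct move x → f 1
          have hmove : Move H x (f 1) := by
            refine ⟨E, hEH, fun i hi => ?_, fun i hi => ?_⟩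
            · rcases eq_or_ne i j with rfl | hij
              · exact hlt
              · have := h1 i hi
                simpa [Function.update_of_ne hij] using this
            · have hij : i ≠ j := fun hij => hi (hij ▸ hjE)
              have := h2 i hi
              rw [Function.update_of_ne hij] at this
              exact this
          exact seqSet_downward (cons_mem_seqSet hmove htail) (by omega)
        · -- f 1 j = x j : f 1 ≤ x, use monotonicity
          have hle : f 1 ≤ x := by
            intro i
            rcases eq_or_ne i j with rfl | hij
            · exact le_of_eq heq
            · by_cases hi : i ∈ E
              · have := h1 i hi
                rw [Function.update_of_ne hij] at this
                exact this.le
              · have := h2 i hi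
                rw [Function.update_of_ne hij] at this
                exact le_of_eq this
          exact seqSet_mono (m + 1) (f 1) x hle htail
      · -- j ∉ E : peel off the extra token at j
        set y : V → ℕ := Function.update (f 1) j (x j) with hy
        have hmove : Move H x y := by
          refine ⟨E, hEH, fun i hi => ?_, fun i hi => ?_⟩
          · have hij : i ≠ j := fun hij => hjE (hij ▸ hi)
            have := h1 i hi
            simpa [hy, Function.update_of_ne hij] using this
          · rcases eq_or_ne i j with rfl | hij
            · simp [hy]
            · have := h2 i hi
              simpa [hy, Function.update_of_ne hij] using this
        have hf1 : f 1 = Function.update y j (y j + 1) := by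
          funext i
          rcases eq_or_ne i j with rfl | hij
          · have := h2 i hjE
            simp [hy, Function.update_self] at this ⊢
            omega
          · simp [hy, Function.update_of_ne hij]
        rw [hf1] at htail
        exact cons_mem_seqSet hmove (ih y j htail)

variable {H : Set (Set V)}

lemma le_height_of_mem (hE : ∅ ∉ H) {x : V → ℕ} {n : ℕ} (hn : n ∈ SeqSet H x) :
    n ≤ height H x :=
  le_csSup (seqSet_bddAbove hE x) hn

lemma mem_of_le_height (hE : ∅ ∉ H) {x : V → ℕ} {n : ℕ} (hn : n ≤ height H x) :
    n ∈ SeqSet H x :=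
  seqSet_downward (Nat.sSup_mem (seqSet_nonempty H x) (seqSet_bddAbove hE x)) hn

lemma height_mono (hE : ∅ ∉ H) {a c : V → ℕ} (hac : a ≤ c) :
    height H a ≤ height H c := by
  rw [height_eq, height_eq]
  exact csSup_le_csSup (seqSet_bddAbove hE c) (seqSet_nonempty H a)
    (fun n hn => seqSet_mono n a c hac hn)

lemma height_step (hE : ∅ ∉ H) (x : V → ℕ) (j : V) :
    height H (Function.update x j (x j + 1)) ≤ height H x + 1 := by
  rw [height_eq]
  refine csSup_le (seqSet_nonempty H _) (fun n hn => ?_)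
  rcases Nat.eq_zero_or_pos n with rfl | hp
  · omega
  · obtain ⟨m, rfl⟩ : ∃ m, n = m + 1 := ⟨n - 1, by omega⟩
    have := le_height_of_mem hE (seqSet_step m x j hn)
    omega

lemma height_ivt (hE : ∅ ∉ H) :
    ∀ (N : ℕ) (a b : V → ℕ), (∑ i, (b i - a i)) = N → a ≤ b →
      ∀ t, height H a ≤ t → t ≤ height H b →
        ∃ c, a ≤ c ∧ c ≤ b ∧ height H c = t := by
  intro N
  induction N with
  | zero =>
      intro a b hsum hab t h1 h2
      have hba : b = a := by
        funext i
        have h3 : b i - a i = 0 :=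
          Finset.sum_eq_zero_iff.mp hsum i (Finset.mem_univ i)
        have h4 : a i ≤ b i := hab i
        omega
      refine ⟨a, le_rfl, hab, ?_⟩
      rw [hba] at h2
      omega
  | succ M ih =>
      intro a b hsum hab t h1 h2
      rcases eq_or_lt_of_le h1 with rfl | hlt
      · exact ⟨a, le_rfl, hab, rfl⟩
      · -- find a coordinate j with a j < b j
        have hpos : ∃ j, a j < b j := by
          by_contra hcon
          push_neg at hcon
          have : ∑ i, (b i - a i) = 0 :=
            Finset.sum_eq_zero (fun i _ => by have := hcon i; omega)
          omega
        obtain ⟨j, hj⟩ := hpos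
        set a' : V → ℕ := Function.update a j (a j + 1) with ha'
        have haa' : a ≤ a' := by
          intro i
          rcases eq_or_ne i j with rfl | hij
          · simp [ha']
          · simp [ha', Function.update_of_ne hij]
        have ha'b : a' ≤ b := by
          intro i
          rcases eq_or_ne i j with rfl | hij
          · simp [ha']; omega
          · simp [ha', Function.update_of_ne hij]; exact hab i
        have hsum' : ∑ i, (b i - a' i) = M := by
          rw [← Finset.add_sum_erase _ _ (Finset.mem_univ j)] at hsum ⊢
          have herase : ∑ i ∈ Finset.univ.erase j, (b i - a' i)
              = ∑ i ∈ Finset.univ.erase j, (b i - a i) := by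
            refine Finset.sum_congr rfl (fun i hi => ?_)
            have hij : i ≠ j := (Finset.mem_erase.mp hi).1
            simp [ha', Function.update_of_ne hij]
          rw [herase]
          have : b j - a' j = b j - a j - 1 := by
            simp only [ha', Function.update_self]
            omega
          omega
        have hstep : height H a' ≤ height H a + 1 := height_step hE a j
        have h1' : height H a' ≤ t := by omega
        obtain ⟨c, hc1, hc2, hc3⟩ := ih a' b hsum' ha'b t h1' h2
        exact ⟨c, le_trans haa' hc1, hc2, hc3⟩

lemma height_zero_of_empty_mem (hE : ∅ ∈ H) (x : V → ℕ) : height H x = 0 := by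
  have huniv : SeqSet H x = Set.univ := by
    ext n
    simp only [Set.mem_univ, iff_true]
    exact ⟨fun _ => x, rfl, fun i _ => ⟨∅, hE, fun i hi => absurd hi (Set.notMem_empty i),
      fun _ _ => rfl⟩⟩
  rw [height_eq, huniv]
  have : ¬ BddAbove (Set.univ : Set ℕ) := by
    rintro ⟨m, hm⟩
    exact absurd (hm (Set.mem_univ (m + 1))) (by omega)
  rw [csSup_of_not_bddAbove this, csSup_empty]
  rfl

end Aux

/-- Contiguity Lemma: if `x → a` and `x → b` are `H₀`-moves with `a ≤ b`, then
every `c` with `a ≤ c ≤ b` is reachable from `x` by an `H₀`-move, and the set of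
heights of such `c` is the full interval `[h(a), h(b)]`. -/
theorem stmt_8 {V : Type*} [Fintype V] (H : Set (Set V)) (H₀ : Set V) (hH₀ : H₀ ∈ H)
    (x a b : V → ℕ)
    (ha : (∀ i ∈ H₀, a i < x i) ∧ ∀ i ∉ H₀, a i = x i)
    (hb : (∀ i ∈ H₀, b i < x i) ∧ ∀ i ∉ H₀, b i = x i)
    (hab : a ≤ b) :
    (∀ c : V → ℕ, a ≤ c → c ≤ b →
        (∀ i ∈ H₀, c i < x i) ∧ ∀ i ∉ H₀, c i = x i) ∧
    height H '' Set.Icc a b = Set.Icc (height H a) (height H b) := by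
  constructor
  · intro c hac hcb
    constructor
    · intro i hi
      exact lt_of_le_of_lt (hcb i) (hb.1 i hi)
    · intro i hi
      have h1 : c i ≤ x i := (hb.2 i hi) ▸ hcb i
      have h2 : x i ≤ c i := (ha.2 i hi) ▸ hac i
      omega
  · by_cases hE : ∅ ∈ H
    · have hz : ∀ y : V → ℕ, height H y = 0 := height_zero_of_empty_mem hE
      apply Set.Subset.antisymm
      · rintro _ ⟨c, _, rfl⟩
        simp [hz]
      · rintro t ht
        simp [hz] at ht
        exact ⟨a, Set.mem_Icc.mpr ⟨le_rfl, hab⟩, by simp [hz, ht]⟩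
    · apply Set.Subset.antisymm
      · rintro _ ⟨c, hc, rfl⟩
        obtain ⟨hac, hcb⟩ := Set.mem_Icc.mp hc
        exact Set.mem_Icc.mpr ⟨height_mono hE hac, height_mono hE hcb⟩
      · rintro t ht
        obtain ⟨h1, h2⟩ := Set.mem_Icc.mp ht
        obtain ⟨c, hac, hcb, hc⟩ := height_ivt hE _ a b rfl hab t h1 h2
        exact ⟨c, Set.mem_Icc.mpr ⟨hac, hcb⟩, hc⟩
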